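/- With the hypotheses of the preceding construction, the bilinear form φ defined by φ(vᵢ, z_j) = δ_{ij}, φ(vᵢ, v_j) = φ(zᵢ, z_j) = 0 (extended bilinearly) is symmetric, nondegenerate, and invariant on the Lie algebra n(A₁,…,A_d); hence (n(A₁,…,A_d), φ) is a quadratic 2-step nilpotent Lie algebra. -/
import Mathlib

open Matrix

/-- A `d`-quadratic family of matrices. -/
def IsQuadraticFamily {K : Type*} [Field K] {d : ℕ}
    (A : Fin d → Matrix (Fin d) (Fin d) K) : Prop :=
  (∀ i, (A i)ᵀ = -(A i)) ∧
  (∀ i k, A i k i = 0) ∧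
  (∀ i j : Fin d, i < j → ∀ k, A i k j = -(A j k i)) ∧
  (Matrix.of fun (k : Fin d) (p : {p : Fin d × Fin d // p.1 < p.2}) =>
      A p.val.1 k p.val.2).rank = d

/-- The 2-step nilpotent bracket associated to a family of matrices, on the space with
basis `{v₁,…,v_d, z₁,…,z_d}`: `[zᵢ,·] = 0`, `[vᵢ,v_j] = Σ_k a^i_{kj} z_k`, extended
bilinearly. -/
def nBracket {K : Type*} [Field K] {d : ℕ} (A : Fin d → Matrix (Fin d) (Fin d) K)
    (p q : (Fin d → K) × (Fin d → K)) : (Fin d → K) × (Fin d → K) :=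
  (0, fun k => ∑ i, ∑ j, p.1 i * q.1 j * A i k j)

/-- The hyperbolic bilinear form with matrix `[[0, I],[I, 0]]` in the basis
`{v₁,…,v_d, z₁,…,z_d}`. -/
def hypForm {K : Type*} [Field K] {d : ℕ}
    (p q : (Fin d → K) × (Fin d → K)) : K :=
  ∑ i, (p.1 i * q.2 i + p.2 i * q.1 i)

/-- for a `d`-quadratic family, the hyperbolic bilinear form
`φ(vᵢ,z_j) = δ_{ij}`, `φ(vᵢ,v_j) = φ(zᵢ,z_j) = 0` is symmetric, nondegenerate and
invariant on `n(A₁,…,A_d)`; hence the latter is a quadratic 2-step nilpotent Lie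
algebra. -/
theorem stmt_12 {K : Type*} [Field K] [CharZero K] {d : ℕ}
    (A : Fin d → Matrix (Fin d) (Fin d) K) (hA : IsQuadraticFamily A) :
    -- symmetric
    (∀ p q : (Fin d → K) × (Fin d → K), hypForm p q = hypForm q p) ∧
    -- nondegenerate
    (∀ p : (Fin d → K) × (Fin d → K), (∀ q, hypForm p q = 0) → p = 0) ∧
    -- invariant
    (∀ p q r, hypForm (nBracket A p q) r = hypForm p (nBracket A q r)) := by
  constructor
  · intro p q; simp only [hypForm]; apply Finset.sum_congr rfl; intro i _; ring
  constructor
  · intro p hp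
    have h1 : ∀ j, p.1 j = 0 := by
      intro j
      have := hp (0, fun i => if i = j then 1 else 0)
      simpa [hypForm, Finset.sum_ite_eq'] using this
    have h2 : ∀ j, p.2 j = 0 := by
      intro j
      have := hp (fun i => if i = j then 1 else 0, 0)
      simpa [hypForm, Finset.sum_ite_eq'] using this
    ext i
    · exact h1 i
    · exact h2 i
  · -- invariance
    obtain ⟨ht, hdiag, hsym, -⟩ := hA
    have h1 : ∀ i k j, A i k j = -A i j k := by
      intro i k j
      have := congrFun (congrFun (ht i) j) k
      simpa [Matrix.transpose_apply] using this
    have h2 : ∀ i j k, A i k j = -A j k i := by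
      intro i j k
      rcases lt_trichotomy i j with h | h | h
      · exact hsym i j h k
      · subst h; simp [hdiag]
      · have := hsym j i h k; rw [this]; ring
    have key : ∀ a b c, A a c b = A b a c := by
      intro a b c
      calc A a c b = -A a b c := h1 a c b
        _ = A c b a := by rw [h2 a c b]; ring
        _ = -A c a b := h1 c b a
        _ = A b a c := by rw [h2 c b a]; ring
    intro p q r
    simp only [hypForm, nBracket, Pi.zero_apply, zero_mul, mul_zero, zero_add, add_zero,
      Finset.sum_mul, Finset.mul_sum]
    rw [Finset.sum_comm]
    apply Finset.sum_congr rfl; intro i _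
    rw [Finset.sum_comm]
    apply Finset.sum_congr rfl; intro j _
    apply Finset.sum_congr rfl; intro k _
    rw [key i j k]; ring
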